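/- Let S be a set with |S| = 4. No bijection f : 2^S → 2^S that is a 3-cycle (i.e., f moves exactly three subsets of S, permuting them cyclically and fixing all others) is both union-subadditive and intersection-subadditive; i.e., no 3-cycle on 2^S belongs to M(S). -/

import Mathlib

open Classical

/-- `f` is union-subadditive: `f (X ∪ Y) ⊆ f X ∪ f Y` for all `X, Y ⊆ S`. -/
def unionSub {S : Type*} (f : Set S → Set S) : Prop :=
  ∀ X Y : Set S, f (X ∪ Y) ⊆ f X ∪ f Y

/-- `f` is intersection-subadditive: `f (X ∩ Y) ⊆ f X ∪ f Y` for all `X, Y ⊆ S`. -/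
def interSub {S : Type*} (f : Set S → Set S) : Prop :=
  ∀ X Y : Set S, f (X ∩ Y) ⊆ f X ∪ f Y

/-! ### Auxiliary machinery: bitmask encoding of subsets of a 4-element type -/

/-- The three-cycle `a ↦ b ↦ c ↦ a` on naturals, fixing everything else. -/
def cycN (a b c x : ℕ) : ℕ :=
  if x = a then b else if x = b then c else if x = c then a else x

set_option maxHeartbeats 10000000 in
set_option synthInstance.maxHeartbeats 2000000 in
set_option synthInstance.maxSize 3000 in
/-- Brute-force verification: no 3-cycle on 16 bitmasks is both union- and
intersection-subadditive (subset `p ⊆ q` is encoded as `p ||| q = q`). -/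
theorem keyN : ∀ a < 16, ∀ b < 16, ∀ c < 16, a ≠ b → b ≠ c → a ≠ c →
    ¬ ((∀ x < 16, ∀ y < 16, cycN a b c (x ||| y) ||| (cycN a b c x ||| cycN a b c y)
          = cycN a b c x ||| cycN a b c y) ∧
       (∀ x < 16, ∀ y < 16, cycN a b c (x &&& y) ||| (cycN a b c x ||| cycN a b c y)
          = cycN a b c x ||| cycN a b c y)) := by decide

def bitsToNat (p q r s : Bool) : ℕ :=
  (cond p 1 0) + (cond q 2 0) + (cond r 4 0) + (cond s 8 0)

noncomputable def mask {S : Type*} (e : S ≃ Fin 4) (X : Set S) : ℕ :=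
  bitsToNat (decide (e.symm 0 ∈ X)) (decide (e.symm 1 ∈ X))
    (decide (e.symm 2 ∈ X)) (decide (e.symm 3 ∈ X))

lemma bitsToNat_lt (p q r s : Bool) : bitsToNat p q r s < 16 := by
  cases p <;> cases q <;> cases r <;> cases s <;> decide

lemma bitsToNat_or : ∀ p q r s p' q' r' s' : Bool,
    bitsToNat (p || p') (q || q') (r || r') (s || s') =
      bitsToNat p q r s ||| bitsToNat p' q' r' s' := by decide

lemma bitsToNat_and : ∀ p q r s p' q' r' s' : Bool,
    bitsToNat (p && p') (q && q') (r && r') (s && s') =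
      bitsToNat p q r s &&& bitsToNat p' q' r' s' := by decide

lemma bitsToNat_inj : ∀ p q r s p' q' r' s' : Bool,
    bitsToNat p q r s = bitsToNat p' q' r' s' →
      p = p' ∧ q = q' ∧ r = r' ∧ s = s' := by decide

lemma mask_lt {S : Type*} (e : S ≃ Fin 4) (X : Set S) : mask e X < 16 :=
  bitsToNat_lt _ _ _ _

lemma mask_union {S : Type*} (e : S ≃ Fin 4) (X Y : Set S) :
    mask e (X ∪ Y) = mask e X ||| mask e Y := by
  unfold mask
  rw [← bitsToNat_or]
  simp only [Set.mem_union, Bool.decide_or]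

lemma mask_inter {S : Type*} (e : S ≃ Fin 4) (X Y : Set S) :
    mask e (X ∩ Y) = mask e X &&& mask e Y := by
  unfold mask
  rw [← bitsToNat_and]
  simp only [Set.mem_inter_iff, Bool.decide_and]

lemma mask_inj {S : Type*} (e : S ≃ Fin 4) {X Y : Set S} (h : mask e X = mask e Y) : X = Y := by
  unfold mask at h
  obtain ⟨h0, h1, h2, h3⟩ := bitsToNat_inj _ _ _ _ _ _ _ _ h
  have key : ∀ i : Fin 4, (e.symm i ∈ X ↔ e.symm i ∈ Y) := by
    intro i
    fin_cases i
    · exact decide_eq_decide.mp h0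
    · exact decide_eq_decide.mp h1
    · exact decide_eq_decide.mp h2
    · exact decide_eq_decide.mp h3
  ext s
  have := key (e s)
  rwa [Equiv.symm_apply_apply] at this

lemma mask_surj {S : Type*} (e : S ≃ Fin 4) : ∀ n < 16, ∃ X : Set S, mask e X = n := by
  intro n hn
  refine ⟨{s | n.testBit (e s) = true}, ?_⟩
  have hb : ∀ b : Bool, decide (b = true) = b := by decide
  have key : ∀ m < 16, bitsToNat (Nat.testBit m 0) (Nat.testBit m 1)
      (Nat.testBit m 2) (Nat.testBit m 3) = m := by decide
  simp only [mask, Set.mem_setOf_eq, Equiv.apply_symm_apply, hb]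
  convert key n hn using 3
  all_goals rfl

theorem stmt19 {S : Type*} [Fintype S] (hS : Fintype.card S = 4)
    (f : Equiv.Perm (Set S)) (h3 : Equiv.Perm.IsThreeCycle f) :
    ¬ (unionSub ⇑f ∧ interSub ⇑f) := by
  rintro ⟨hu, hi⟩
  have e : S ≃ Fin 4 := Fintype.equivFinOfCardEq hS
  -- extract the three moved sets
  obtain ⟨A, hA⟩ : ∃ A, A ∈ f.support :=
    Finset.card_pos.mp (by rw [h3.card_support]; norm_num)
  have hAB : A ≠ f A := fun h => (Equiv.Perm.mem_support.mp hA) h.symm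
  have hB : f A ∈ f.support := Equiv.Perm.apply_mem_support.mpr hA
  have hBC : f A ≠ f (f A) := fun h => (Equiv.Perm.mem_support.mp hB) h.symm
  have hC : f (f A) ∈ f.support := Equiv.Perm.apply_mem_support.mpr hB
  have hf3 : f ^ 3 = 1 := by rw [← h3.orderOf]; exact pow_orderOf_eq_one f
  have hfC : f (f (f A)) = A := by
    have h' : (f ^ 3) A = A := by rw [hf3]; rfl
    have h'' : (f ^ 3) A = f (f (f A)) := by
      simp [pow_succ, Equiv.Perm.mul_apply]
    rw [← h'', h']
  have hAC : A ≠ f (f A) := by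
    intro h
    apply hAB
    have h' := congrArg f h
    rw [hfC] at h'
    exact h'.symm
  have hsupp : f.support = {A, f A, f (f A)} := by
    have hsub : ({A, f A, f (f A)} : Finset (Set S)) ⊆ f.support := by
      intro X hX
      simp only [Finset.mem_insert, Finset.mem_singleton] at hX
      rcases hX with rfl | rfl | rfl <;> assumption
    have hcard : (3 : ℕ) ≤ ({A, f A, f (f A)} : Finset (Set S)).card := by
      rw [Finset.card_insert_of_notMem (by simp [hAB, hAC]),
        Finset.card_insert_of_notMem (by simp [hBC]), Finset.card_singleton]
    exact (Finset.eq_of_subset_of_card_le hsub (by rw [h3.card_support]; exact hcard)).symm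
  have hfix : ∀ X : Set S, X ≠ A → X ≠ f A → X ≠ f (f A) → f X = X := by
    intro X h1 h2 h3'
    apply Equiv.Perm.notMem_support.mp
    rw [hsupp]; simp [h1, h2, h3']
  have hab : mask e A ≠ mask e (f A) := fun h => hAB (mask_inj e h)
  have hbc : mask e (f A) ≠ mask e (f (f A)) := fun h => hBC (mask_inj e h)
  have hac : mask e A ≠ mask e (f (f A)) := fun h => hAC (mask_inj e h)
  have hcyc : ∀ X : Set S,
      mask e (f X) = cycN (mask e A) (mask e (f A)) (mask e (f (f A))) (mask e X) := by
    intro X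
    unfold cycN
    by_cases h1 : X = A
    · subst h1; rw [if_pos rfl]
    · rw [if_neg (fun h => h1 (mask_inj e h))]
      by_cases h2 : X = f A
      · subst h2; rw [if_pos rfl]
      · rw [if_neg (fun h => h2 (mask_inj e h))]
        by_cases h3' : X = f (f A)
        · subst h3'; rw [if_pos rfl, hfC]
        · rw [if_neg (fun h => h3' (mask_inj e h)), hfix X h1 h2 h3']
  apply keyN _ (mask_lt e A) _ (mask_lt e (f A)) _ (mask_lt e (f (f A))) hab hbc hac
  constructor
  · intro x hx y hy
    obtain ⟨X, rfl⟩ := mask_surj e x hx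
    obtain ⟨Y, rfl⟩ := mask_surj e y hy
    rw [← mask_union, ← hcyc, ← hcyc, ← hcyc, ← mask_union, ← mask_union]
    exact congrArg (mask e) (Set.union_eq_right.mpr (hu X Y))
  · intro x hx y hy
    obtain ⟨X, rfl⟩ := mask_surj e x hx
    obtain ⟨Y, rfl⟩ := mask_surj e y hy
    rw [← mask_inter, ← hcyc, ← hcyc, ← hcyc, ← mask_union, ← mask_union]
    exact congrArg (mask e) (Set.union_eq_right.mpr (hi X Y))
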